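/- Let ℓ be a prime and let N be an open normal subgroup of SL_2(Z_ℓ) of finite index n with n < ℓ. Then N = SL_2(Z_ℓ). (Indeed, since 1/n ∈ Z_ℓ, the matrix [[1,1],[0,1]] equals [[1,1/n],[0,1]]^n and hence lies in N, and similarly [[1,0],[1,1]] ∈ N; these two matrices generate a dense subgroup of SL_2(Z_ℓ), and N is closed.) -/
import Mathlib


/-- The `ℓ`-adic topology on `SL₂(ℤ_ℓ)`, induced from the (product) topology on matrices. -/
instance (ℓ : ℕ) [Fact ℓ.Prime] :
    TopologicalSpace (Matrix.SpecialLinearGroup (Fin 2) ℤ_[ℓ]) :=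
  inferInstanceAs (TopologicalSpace {A : Matrix (Fin 2) (Fin 2) ℤ_[ℓ] // A.det = 1})

section Aux

variable {ℓ : ℕ} [Fact ℓ.Prime]

/-- Upper unipotent element of `SL₂(ℤ_ℓ)`. -/
noncomputable def Uu (t : ℤ_[ℓ]) : Matrix.SpecialLinearGroup (Fin 2) ℤ_[ℓ] :=
  ⟨!![1, t; 0, 1], by simp [Matrix.det_fin_two_of]⟩

/-- Lower unipotent element of `SL₂(ℤ_ℓ)`. -/
noncomputable def Ll (t : ℤ_[ℓ]) : Matrix.SpecialLinearGroup (Fin 2) ℤ_[ℓ] :=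
  ⟨!![1, 0; t, 1], by simp [Matrix.det_fin_two_of]⟩

/-- The Weyl element of `SL₂(ℤ_ℓ)`. -/
noncomputable def Ww : Matrix.SpecialLinearGroup (Fin 2) ℤ_[ℓ] :=
  ⟨!![0, -1; 1, 0], by simp [Matrix.det_fin_two_of]⟩

lemma Uu_mul (s t : ℤ_[ℓ]) : Uu s * Uu t = Uu (s + t) := by
  apply Subtype.ext
  show (Uu s).1 * (Uu t).1 = _
  simp [Uu, Matrix.mul_fin_two, add_comm]

lemma Uu_pow (s : ℤ_[ℓ]) (m : ℕ) : (Uu s) ^ m = Uu ((m : ℤ_[ℓ]) * s) := by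
  induction m with
  | zero =>
    apply Subtype.ext
    show (1 : Matrix (Fin 2) (Fin 2) ℤ_[ℓ]) = _
    simp [Uu, Matrix.one_fin_two]
  | succ k ih =>
    rw [pow_succ, ih, Uu_mul]
    congr 1
    push_cast
    ring

lemma Ll_eq (s : ℤ_[ℓ]) : Ll s = Ww * Uu (-s) * Ww⁻¹ := by
  rw [eq_mul_inv_iff_mul_eq]
  apply Subtype.ext
  show (Ll s).1 * Ww.1 = Ww.1 * (Uu (-s)).1
  simp [Ll, Ww, Uu, Matrix.mul_fin_two]

/-- An element of `SL₂` over a local ring whose lower-left entry is a unit factors as a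
product of elementary (unipotent) matrices. -/
lemma key_decomp (A : Matrix.SpecialLinearGroup (Fin 2) ℤ_[ℓ]) (c : ℤ_[ℓ]ˣ)
    (hcc : (c : ℤ_[ℓ]) = A.1 1 0) :
    A = Uu ((A.1 0 0 - 1) * ((c⁻¹ : ℤ_[ℓ]ˣ) : ℤ_[ℓ])) * Ll (A.1 1 0)
        * Uu ((A.1 1 1 - 1) * ((c⁻¹ : ℤ_[ℓ]ˣ) : ℤ_[ℓ])) := by
  have hdet : A.1 0 0 * A.1 1 1 - A.1 0 1 * A.1 1 0 = 1 := by
    have h2 := A.2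
    rwa [Matrix.det_fin_two] at h2
  have hci : ((c⁻¹ : ℤ_[ℓ]ˣ) : ℤ_[ℓ]) * (c : ℤ_[ℓ]) = 1 := by
    rw [← Units.val_mul, inv_mul_cancel, Units.val_one]
  apply Subtype.ext
  show A.1 = (Uu _).1 * (Ll _).1 * (Uu _).1
  simp only [Uu, Ll, Matrix.mul_fin_two]
  rw [← hcc] at hdet ⊢
  rw [Matrix.eta_fin_two A.1, ← hcc]
  ext i j
  fin_cases i <;> fin_cases j <;> simp
  · linear_combination (-((c⁻¹ : ℤ_[ℓ]ˣ) : ℤ_[ℓ])) * hdet - A.1 0 1 * hci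
  · linear_combination (1 - A.1 1 1) * hci

end Aux

/-- let `ℓ` be a prime and let `N` be an open normal subgroup of `SL₂(ℤ_ℓ)` of
finite index `n` with `n < ℓ`.  Then `N = SL₂(ℤ_ℓ)`. -/
theorem open_normal_subgroup_eq_top_of_index_lt
    (ℓ : ℕ) [Fact ℓ.Prime]
    (N : Subgroup (Matrix.SpecialLinearGroup (Fin 2) ℤ_[ℓ])) [N.Normal]
    (hopen : IsOpen (N : Set (Matrix.SpecialLinearGroup (Fin 2) ℤ_[ℓ])))
    (hfin : N.index ≠ 0) (hlt : N.index < ℓ) :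
    N = ⊤ := by
  -- the index is a unit in ℤ_ℓ
  have hndvd : ¬ ((ℓ : ℤ) ∣ (N.index : ℤ)) := by
    rw [Int.natCast_dvd_natCast]
    exact fun h => absurd (Nat.le_of_dvd (Nat.pos_of_ne_zero hfin) h) (not_le.mpr hlt)
  have hnorm : ‖((N.index : ℤ) : ℤ_[ℓ])‖ = 1 :=
    le_antisymm (PadicInt.norm_le_one _)
      (not_lt.mp (fun h => hndvd ((PadicInt.norm_int_lt_one_iff_dvd _).mp h)))
  have hunit : IsUnit ((N.index : ℤ_[ℓ])) := by
    rw [PadicInt.isUnit_iff]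
    exact_mod_cast hnorm
  obtain ⟨nu, hnu⟩ := hunit
  -- all unipotents lie in N, since `u(t) = u(t/n)^n` and `n`-th powers lie in `N`
  have hUmem : ∀ t : ℤ_[ℓ], Uu t ∈ N := by
    intro t
    have h := N.pow_index_mem (Uu (((nu⁻¹ : ℤ_[ℓ]ˣ) : ℤ_[ℓ]) * t))
    rw [Uu_pow] at h
    have he : ((N.index : ℤ_[ℓ])) * (((nu⁻¹ : ℤ_[ℓ]ˣ) : ℤ_[ℓ]) * t) = t := by
      rw [← mul_assoc, ← hnu, Units.mul_inv, one_mul]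
    rwa [he] at h
  have hLmem : ∀ t : ℤ_[ℓ], Ll t ∈ N := by
    intro t
    rw [Ll_eq]
    exact ‹N.Normal›.conj_mem _ (hUmem (-t)) Ww
  -- key step: matrices with unit lower-left entry lie in N
  have key : ∀ A : Matrix.SpecialLinearGroup (Fin 2) ℤ_[ℓ], IsUnit (A.1 1 0) → A ∈ N := by
    intro A hc
    obtain ⟨c, hcc⟩ := hc
    rw [key_decomp A c hcc]
    exact N.mul_mem (N.mul_mem (hUmem _) (hLmem _)) (hUmem _)
  rw [Subgroup.eq_top_iff']
  intro A
  by_cases hc : IsUnit (A.1 1 0)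
  · exact key A hc
  · -- lower-left not a unit; then upper-left is, and adding row 1 to row 2 fixes it
    have hdet : A.1 0 0 * A.1 1 1 - A.1 0 1 * A.1 1 0 = 1 := by
      have h2 := A.2
      rwa [Matrix.det_fin_two] at h2
    have ha : IsUnit (A.1 0 0) := by
      by_contra ha
      have h1 : ¬ IsUnit (A.1 0 0 * A.1 1 1) := fun h => ha (isUnit_of_mul_isUnit_left h)
      have h2 : ¬ IsUnit (-(A.1 0 1 * A.1 1 0)) := fun h =>
        hc (isUnit_of_mul_isUnit_right (by simpa using h.neg))
      have h3 := IsLocalRing.nonunits_add h1 h2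
      rw [← sub_eq_add_neg, hdet] at h3
      exact h3 isUnit_one
    have hsum : IsUnit (A.1 0 0 + A.1 1 0) := by
      by_contra hs
      have h3 := IsLocalRing.nonunits_add hs (fun h : IsUnit (-(A.1 1 0)) =>
        hc (by simpa using h.neg))
      rw [add_assoc, add_neg_cancel, add_zero] at h3
      exact h3 ha
    have hB : (Ll 1 * A).1 1 0 = A.1 0 0 + A.1 1 0 := by
      have h4 : (Ll (1 : ℤ_[ℓ]) * A).1 = (Ll 1).1 * A.1 := rfl
      rw [h4, Matrix.mul_apply, Fin.sum_univ_two]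
      simp [Ll]
    have hBmem : (Ll 1 * A) ∈ N := key _ (hB ▸ hsum)
    have hAe : A = (Ll 1)⁻¹ * (Ll 1 * A) := by group
    rw [hAe]
    exact N.mul_mem (N.inv_mem (hLmem 1)) hBmem
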